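/- The iterated integral ∫_{√2−1}^{1} (∫_{1−(1+√2)x}^{(1−(1+√2)x)/√2} √2/(x((1+√2)x + √2·y)) dy) dx equals Li₂(1/√2) − Li₂(1 − 1/√2) + ln(√2)·ln(√2−1). (This is the integral of the return time function over the subregion Ω_HF of the Poincaré section.) -/

import Mathlib

open Real MeasureTheory intervalIntegral

noncomputable section

/-- The real dilogarithm Li₂(x) = ∑_{k ≥ 1} x^k/k². -/
def Li2 (x : ℝ) : ℝ := ∑' k : ℕ, x ^ (k + 1) / ((k : ℝ) + 1) ^ 2

lemma li2_summable {r : ℝ} (h0 : 0 ≤ r) (h1 : r < 1) :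
    Summable (fun k : ℕ => r ^ (k + 1) / ((k : ℝ) + 1) ^ 2) := by
  refine Summable.of_nonneg_of_le
    (fun k => div_nonneg (pow_nonneg h0 _) (sq_nonneg _)) (fun k => ?_)
    (summable_geometric_of_lt_one h0 h1)
  have hk : (1 : ℝ) ≤ ((k : ℝ) + 1) ^ 2 := by
    have h : (1:ℝ) ≤ (k:ℝ) + 1 := by linarith [Nat.cast_nonneg (α := ℝ) k]
    nlinarith
  calc r ^ (k + 1) / ((k : ℝ) + 1) ^ 2 ≤ r ^ (k + 1) / 1 := by
        apply div_le_div_of_nonneg_left (pow_nonneg h0 _) one_pos hk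
    _ = r ^ k * r := by rw [div_one, pow_succ]
    _ ≤ r ^ k * 1 := mul_le_mul_of_nonneg_left h1.le (pow_nonneg h0 _)
    _ = r ^ k := mul_one _

lemma li2_sub_li2 {a b : ℝ} (ha : 0 < a) (hab : a ≤ b) (hb : b < 1) :
    (∫ x in a..b, -Real.log (1 - x) / x) = Li2 b - Li2 a := by
  have hb0 : (0:ℝ) ≤ b := ha.le.trans hab
  have ha1 : a < 1 := lt_of_le_of_lt hab hb
  have key : ∀ k : ℕ, (∫ x in Set.Ioc a b, (x ^ k / ((k:ℝ)+1))) =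
      b ^ (k+1) / ((k:ℝ)+1)^2 - a ^ (k+1) / ((k:ℝ)+1)^2 := by
    intro k
    have hk : ((k:ℝ)+1) ≠ 0 := by positivity
    rw [← intervalIntegral.integral_of_le hab, intervalIntegral.integral_div, integral_pow,
      div_div, ← sub_div]
    ring
  have hint : ∀ k : ℕ, Integrable (fun x : ℝ => x ^ k / ((k:ℝ)+1))
      (volume.restrict (Set.Ioc a b)) := by
    intro k
    exact ((continuous_pow k).div_const _).integrableOn_Ioc
  have hnorm : ∀ k : ℕ, (∫ x in Set.Ioc a b, ‖x ^ k / ((k:ℝ)+1)‖) =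
      b ^ (k+1) / ((k:ℝ)+1)^2 - a ^ (k+1) / ((k:ℝ)+1)^2 := by
    intro k
    rw [← key k]
    refine setIntegral_congr_fun measurableSet_Ioc (fun x hx => ?_)
    have hx0 : (0:ℝ) ≤ x := (ha.trans hx.1).le
    rw [Real.norm_eq_abs, abs_of_nonneg (by positivity)]
  have hsum : Summable (fun k : ℕ => ∫ x in Set.Ioc a b, ‖x ^ k / ((k:ℝ)+1)‖) := by
    simp_rw [hnorm]
    exact (li2_summable hb0 hb).sub (li2_summable ha.le ha1)
  have swap := MeasureTheory.integral_tsum_of_summable_integral_norm hint hsum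
  have lhs : (∑' k : ℕ, ∫ x in Set.Ioc a b, (x ^ k / ((k:ℝ)+1))) = Li2 b - Li2 a := by
    simp_rw [key]
    rw [Summable.tsum_sub (li2_summable hb0 hb) (li2_summable ha.le ha1)]
    rfl
  have rhs : (∫ x in Set.Ioc a b, (∑' k : ℕ, x ^ k / ((k:ℝ)+1))) =
      ∫ x in Set.Ioc a b, -Real.log (1 - x) / x := by
    refine setIntegral_congr_fun measurableSet_Ioc (fun x hx => ?_)
    have hx0 : 0 < x := ha.trans hx.1
    have hx1 : |x| < 1 := by rw [abs_of_pos hx0]; exact lt_of_le_of_lt hx.2 hb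
    have hs := (hasSum_pow_div_log_of_abs_lt_one hx1).div_const x
    have heq : (fun n : ℕ => x ^ (n+1) / ((n:ℝ)+1) / x) =
        fun n : ℕ => x ^ n / ((n:ℝ)+1) := by
      funext n
      field_simp [hx0.ne']
      ring
    rw [heq] at hs
    exact hs.tsum_eq
  rw [intervalIntegral.integral_of_le hab, ← rhs, ← swap, lhs]

theorem integral_HF :
    (∫ x in (Real.sqrt 2 - 1)..(1:ℝ),
        ∫ y in (1 - (1 + Real.sqrt 2) * x)..((1 - (1 + Real.sqrt 2) * x) / Real.sqrt 2),
          Real.sqrt 2 / (x * ((1 + Real.sqrt 2) * x + Real.sqrt 2 * y)))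
      = Li2 (1 / Real.sqrt 2) - Li2 (1 - 1 / Real.sqrt 2)
        + Real.log (Real.sqrt 2) * Real.log (Real.sqrt 2 - 1) := by
  have h2 : (Real.sqrt 2) ^ 2 = 2 := Real.sq_sqrt (by norm_num)
  have h2n : (0:ℝ) ≤ Real.sqrt 2 := Real.sqrt_nonneg 2
  have h1lt : (1:ℝ) < Real.sqrt 2 := by nlinarith
  have h2lt : Real.sqrt 2 < 2 := by nlinarith
  have hs0 : (0:ℝ) < Real.sqrt 2 - 1 := by linarith
  have hs1 : Real.sqrt 2 - 1 ≤ 1 := by linarith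
  set s : ℝ := Real.sqrt 2 - 1 with hs
  -- Step 1: inner integral
  have inner : ∀ x ∈ Set.uIcc s (1:ℝ),
      (∫ y in (1 - (1 + Real.sqrt 2) * x)..((1 - (1 + Real.sqrt 2) * x) / Real.sqrt 2),
          Real.sqrt 2 / (x * ((1 + Real.sqrt 2) * x + Real.sqrt 2 * y)))
        = -Real.log (Real.sqrt 2 - x) / x := by
    intro x hx
    rw [Set.uIcc_of_le hs1] at hx
    obtain ⟨hxl, hxr⟩ := hx
    have hx0 : 0 < x := lt_of_lt_of_le hs0 hxl
    set a : ℝ := 1 - (1 + Real.sqrt 2) * x with ha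
    have ha0 : a ≤ 0 := by
      have : (1 + Real.sqrt 2) * (Real.sqrt 2 - 1) ≤ (1 + Real.sqrt 2) * x := by
        apply mul_le_mul_of_nonneg_left hxl (by linarith)
      nlinarith
    have haa : a ≤ a / Real.sqrt 2 := by
      rw [le_div_iff₀ (by linarith : (0:ℝ) < Real.sqrt 2)]
      nlinarith
    have hpos : ∀ y ∈ Set.uIcc a (a / Real.sqrt 2),
        0 < (1 + Real.sqrt 2) * x + Real.sqrt 2 * y := by
      intro y hy
      rw [Set.uIcc_of_le haa] at hy
      have : Real.sqrt 2 * a ≤ Real.sqrt 2 * y := by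
        apply mul_le_mul_of_nonneg_left hy.1 (by linarith)
      have hxs : x < Real.sqrt 2 := lt_of_le_of_lt hxr h1lt
      nlinarith
    have hderiv : ∀ y ∈ Set.uIcc a (a / Real.sqrt 2),
        HasDerivAt (fun y => (1/x) * Real.log ((1 + Real.sqrt 2) * x + Real.sqrt 2 * y))
          (Real.sqrt 2 / (x * ((1 + Real.sqrt 2) * x + Real.sqrt 2 * y))) y := by
      intro y hy
      have hy0 := hpos y hy
      have hlin : HasDerivAt (fun y : ℝ => (1 + Real.sqrt 2) * x + Real.sqrt 2 * y)
          (Real.sqrt 2) y := by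
        simpa using ((hasDerivAt_id y).const_mul (Real.sqrt 2)).const_add
          ((1 + Real.sqrt 2) * x)
      have hlog := (Real.hasDerivAt_log hy0.ne').comp y hlin
      have := hlog.const_mul (1/x)
      refine this.congr_deriv ?_
      simp only [div_eq_mul_inv, mul_inv]
      ring
    have hcont : IntervalIntegrable
        (fun y => Real.sqrt 2 / (x * ((1 + Real.sqrt 2) * x + Real.sqrt 2 * y)))
        volume a (a / Real.sqrt 2) := by
      apply ContinuousOn.intervalIntegrable
      apply ContinuousOn.div continuousOn_const
      · exact (continuousOn_const.mul (continuousOn_const.add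
          (continuousOn_const.mul continuousOn_id)))
      · intro y hy
        exact mul_ne_zero hx0.ne' (hpos y hy).ne'
    rw [intervalIntegral.integral_eq_sub_of_hasDerivAt hderiv hcont]
    have e1 : (1 + Real.sqrt 2) * x + Real.sqrt 2 * (a / Real.sqrt 2) = 1 := by
      rw [mul_div_cancel₀ _ (by linarith : Real.sqrt 2 ≠ 0)]
      simp [ha]
    have e2 : (1 + Real.sqrt 2) * x + Real.sqrt 2 * a = Real.sqrt 2 - x := by
      rw [ha]; ring_nf; nlinarith [h2]
    rw [e1, e2, Real.log_one]
    field_simp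
    ring
  rw [intervalIntegral.integral_congr inner]
  -- Step 2: split the logarithm
  have hsplit : ∀ x ∈ Set.uIcc s (1:ℝ),
      -Real.log (Real.sqrt 2 - x) / x
        = (-Real.log (Real.sqrt 2)) / x + (-Real.log (1 - x / Real.sqrt 2)) / x := by
    intro x hx
    rw [Set.uIcc_of_le hs1] at hx
    have hx0 : 0 < x := lt_of_lt_of_le hs0 hx.1
    have hxs : x < Real.sqrt 2 := lt_of_le_of_lt hx.2 h1lt
    have h1x : 0 < 1 - x / Real.sqrt 2 := by
      rw [sub_pos, div_lt_one (by linarith)]; exact hxs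
    have : Real.sqrt 2 - x = Real.sqrt 2 * (1 - x / Real.sqrt 2) := by
      field_simp
    rw [this, Real.log_mul (by linarith) h1x.ne']
    ring
  rw [intervalIntegral.integral_congr hsplit]
  have hi1 : IntervalIntegrable (fun x => (-Real.log (Real.sqrt 2)) / x) volume s 1 := by
    apply ContinuousOn.intervalIntegrable
    apply ContinuousOn.div continuousOn_const continuousOn_id
    intro x hx
    rw [Set.uIcc_of_le hs1] at hx
    exact (lt_of_lt_of_le hs0 hx.1).ne'
  have hi2 : IntervalIntegrable (fun x => (-Real.log (1 - x / Real.sqrt 2)) / x) volume s 1 := by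
    apply ContinuousOn.intervalIntegrable
    refine ContinuousOn.div ?_ continuousOn_id ?_
    · apply ContinuousOn.neg
      apply ContinuousOn.log
      · exact continuousOn_const.sub (continuousOn_id.div_const _)
      · intro x hx
        rw [Set.uIcc_of_le hs1] at hx
        have hxs : x < Real.sqrt 2 := lt_of_le_of_lt hx.2 h1lt
        have : 0 < 1 - x / Real.sqrt 2 := by
          rw [sub_pos, div_lt_one (by linarith)]; exact hxs
        exact this.ne'
    · intro x hx
      rw [Set.uIcc_of_le hs1] at hx
      exact (lt_of_lt_of_le hs0 hx.1).ne'
  rw [intervalIntegral.integral_add hi1 hi2]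
  -- Step 3: first piece
  have p1 : (∫ x in s..(1:ℝ), (-Real.log (Real.sqrt 2)) / x)
      = Real.log (Real.sqrt 2) * Real.log s := by
    simp_rw [div_eq_mul_inv]
    rw [intervalIntegral.integral_const_mul, integral_inv_of_pos hs0 one_pos]
    rw [one_div, Real.log_inv]
    ring
  -- Step 4: second piece via substitution
  have p2 : (∫ x in s..(1:ℝ), (-Real.log (1 - x / Real.sqrt 2)) / x)
      = Li2 (1 / Real.sqrt 2) - Li2 (s / Real.sqrt 2) := by
    have hkey := intervalIntegral.inv_smul_integral_comp_div (a := s) (b := (1:ℝ))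
      (f := fun u => -Real.log (1 - u) / u) (Real.sqrt 2)
    have hsub : (∫ x in s..(1:ℝ), (-Real.log (1 - x / Real.sqrt 2)) / x)
        = (Real.sqrt 2)⁻¹ • ∫ x in s..(1:ℝ),
            -Real.log (1 - x / Real.sqrt 2) / (x / Real.sqrt 2) := by
      rw [← intervalIntegral.integral_smul]
      apply intervalIntegral.integral_congr
      intro x hx
      rw [Set.uIcc_of_le hs1] at hx
      have hx0 : (0:ℝ) < x := lt_of_lt_of_le hs0 hx.1
      simp only [smul_eq_mul]
      rw [div_div_eq_mul_div]
      field_simp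
    rw [hsub, hkey]
    apply li2_sub_li2
    · positivity
    · apply div_le_div_of_nonneg_right hs1 (by linarith)
    · rw [div_lt_one (by linarith)]; exact h1lt
  rw [p1, p2]
  have : s / Real.sqrt 2 = 1 - 1 / Real.sqrt 2 := by
    rw [hs]
    field_simp
  rw [this]
  ring
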